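/- Let G ≤ Aut X* be a level-transitive, self-similar group which is regular branch over a subgroup K. Then every non-trivial normal subgroup of G contains Xⁿ*K′ for all n sufficiently large, where K′ = [K,K] is the derived subgroup of K. -/

import Mathlib

open Equiv

/-! ## The binary rooted tree and the twisted twin of the Grigorchuk group

We identify the vertex set of the infinite rooted binary tree with `V = List Bool`
(the free monoid `X*` on `X = {0,1}`), and realize automorphisms of the tree as
permutations of `V`.  The generators `a, b, c, d` of the twisted twin `G` of the
Grigorchuk group are defined by the recursive rules
`a(xw) = (¬x)w`, `ψ(b) = (c,a)`, `ψ(c) = (a,d)`, `ψ(d) = (1,b)`. -/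

abbrev V : Type := List Bool

def actA : V → V
  | [] => []
  | x :: w => (!x) :: w

theorem actA_invol : Function.Involutive actA := fun w => by
  cases w with
  | nil => rfl
  | cons x w => simp [actA]

mutual
  def actB : V → V
    | [] => []
    | false :: w => false :: actC w
    | true :: w => true :: actA w
  def actC : V → V
    | [] => []
    | false :: w => false :: actA w
    | true :: w => true :: actD w
  def actD : V → V
    | [] => []
    | false :: w => false :: w
    | true :: w => true :: actB w
end

theorem act_invol3 (w : V) :
    actB (actB w) = w ∧ actC (actC w) = w ∧ actD (actD w) = w := by
  induction w with
  | nil => exact ⟨rfl, rfl, rfl⟩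
  | cons x w ih =>
    cases x <;>
      exact ⟨by simp [actB, actC, actD, ih.1, ih.2.1, ih.2.2, actA_invol w],
        by simp [actB, actC, actD, ih.1, ih.2.1, ih.2.2, actA_invol w],
        by simp [actB, actC, actD, ih.1, ih.2.1, ih.2.2, actA_invol w]⟩

theorem actB_invol : Function.Involutive actB := fun w => (act_invol3 w).1
theorem actC_invol : Function.Involutive actC := fun w => (act_invol3 w).2.1
theorem actD_invol : Function.Involutive actD := fun w => (act_invol3 w).2.2

/-- The generator `a`: the root swap. -/
def a : Perm V := actA_invol.toPerm actA
/-- The generator `b`, with `ψ(b) = (c, a)`. -/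
def b : Perm V := actB_invol.toPerm actB
/-- The generator `c`, with `ψ(c) = (a, d)`. -/
def c : Perm V := actC_invol.toPerm actC
/-- The generator `d`, with `ψ(d) = (1, b)`. -/
def d : Perm V := actD_invol.toPerm actD

@[simp] theorem coe_a : ⇑a = actA := rfl
@[simp] theorem coe_b : ⇑b = actB := rfl
@[simp] theorem coe_c : ⇑c = actC := rfl
@[simp] theorem coe_d : ⇑d = actD := rfl

/-- The twisted twin of the Grigorchuk group. -/
def G : Subgroup (Perm V) := Subgroup.closure {a, b, c, d}

theorem a_mem_G : a ∈ G := Subgroup.subset_closure (by simp)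
theorem b_mem_G : b ∈ G := Subgroup.subset_closure (by simp)
theorem c_mem_G : c ∈ G := Subgroup.subset_closure (by simp)
theorem d_mem_G : d ∈ G := Subgroup.subset_closure (by simp)

/-- `hasState g v s` says that the state (section) of `g` at the vertex `v` is `s`,
i.e. `g (v ++ w) = g v ++ s w` for all `w`. -/
def hasState (g : Perm V) (v : V) (s : Perm V) : Prop :=
  ∀ w : V, g (v ++ w) = g v ++ s w

def vstarFun (v : V) (f : V → V) : V → V :=
  fun w => if v <+: w then v ++ f (w.drop v.length) else w

theorem vstarFun_comp (v : V) (f f' : V → V) (w : V) :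
    vstarFun v f (vstarFun v f' w) = vstarFun v (f ∘ f') w := by
  by_cases h : v <+: w
  · obtain ⟨t, rfl⟩ := h
    simp [vstarFun, List.prefix_append, List.drop_left]
  · simp [vstarFun, h]

theorem vstarFun_id (v w : V) : vstarFun v id w = w := by
  by_cases h : v <+: w
  · obtain ⟨t, rfl⟩ := h
    simp [vstarFun, List.prefix_append, List.drop_left]
  · simp [vstarFun, h]

/-- `vstar v g` is the automorphism `v * g`, acting as `g` on the subtree rooted
at `v` and trivially elsewhere. -/
def vstar (v : V) (g : Perm V) : Perm V where
  toFun := vstarFun v g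
  invFun := vstarFun v g.symm
  left_inv := fun w => by
    rw [vstarFun_comp, Equiv.symm_comp_self]
    exact vstarFun_id v w
  right_inv := fun w => by
    rw [vstarFun_comp, Equiv.self_comp_symm]
    exact vstarFun_id v w

/-- `XstarSub n H` is the subgroup `Xⁿ * H`: the product of the copies `v * H`
over all vertices `v` of level `n` (equivalently, the subgroup they generate). -/
def XstarSub (n : ℕ) (H : Subgroup (Perm V)) : Subgroup (Perm V) :=
  Subgroup.closure {p | ∃ v : V, ∃ g : Perm V, v.length = n ∧ g ∈ H ∧ p = vstar v g}

/-- `pairPerm s₀ s₁ = ψ⁻¹(s₀, s₁)`: the first-level stabilizer element whose states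
at the vertices `0` and `1` are `s₀` and `s₁`. -/
def pairPerm (s₀ s₁ : Perm V) : Perm V := vstar [false] s₀ * vstar [true] s₁

/-- The permutations fixing every vertex of level `n`. -/
def stabLevel (n : ℕ) : Subgroup (Perm V) where
  carrier := {g : Perm V | ∀ v : V, v.length = n → g v = v}
  one_mem' := fun _ _ => rfl
  mul_mem' := by
    intro g h hg hh v hv
    show g (h v) = v
    rw [hh v hv, hg v hv]
  inv_mem' := by
    intro g hg v hv
    show g⁻¹ v = v
    conv_lhs => rw [← hg v hv]
    exact g.symm_apply_apply v

/-- The `n`-th level stabilizer `Stab_G(n)` of `G`. -/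
def stabG (n : ℕ) : Subgroup (Perm V) := G ⊓ stabLevel n

/-- The commutator `[x, y] = x⁻¹ y⁻¹ x y` (paper convention). -/
def pc (x y : Perm V) : Perm V := x⁻¹ * y⁻¹ * x * y
/-- Conjugation `xʸ = y⁻¹ x y`. -/
def cj (x y : Perm V) : Perm V := y⁻¹ * x * y

/-- The normal closure in `G` of a subset `S` of `G`. -/
def ncl (S : Set (Perm V)) : Subgroup (Perm V) :=
  Subgroup.closure {x | ∃ s ∈ S, ∃ g ∈ G, x = g⁻¹ * s * g}

/-- `K = ⟨[a,b],[b,c],[b,d],[c,d], bcd⟩^G`. -/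
def K : Subgroup (Perm V) := ncl {pc a b, pc b c, pc b d, pc c d, b * c * d}

/-- The subgroup `[K, G]`. -/
def KG : Subgroup (Perm V) := ⁅K, G⁆

/-- The subgroup `C`, generated by `[K,G]` and `[a,b][b,c]`. -/
def Csub : Subgroup (Perm V) := KG ⊔ Subgroup.closure {pc a b * pc b c}

/-- `γ_n(G)`, the `n`-th term of the lower central series of `G` (starting at `γ₁ = G`),
viewed as a subgroup of `Perm V`. -/
def gammaG (n : ℕ) : Subgroup (Perm V) :=
  Subgroup.map G.subtype ((⊤ : Subgroup ↥G).lowerCentralSeries (n - 1))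

/-- `f` induces an automorphism of the rooted binary tree: it preserves the levels and
the prefix (ancestor) relation. -/
def IsTreeAut (f : V → V) : Prop :=
  (∀ v : V, (f v).length = v.length) ∧ ∀ v w : V, f v <+: f (v ++ w)

/-- The automorphism group `Aut X*` of the binary rooted tree, as a subgroup of the
permutations of the vertex set. -/
def autTree : Subgroup (Perm V) where
  carrier := {g : Perm V | IsTreeAut ⇑g}
  one_mem' := ⟨fun _ => rfl, fun v w => by
    show v <+: v ++ w
    exact List.prefix_append v w⟩
  mul_mem' := by
    rintro g h ⟨hg1, hg2⟩ ⟨hh1, hh2⟩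
    constructor
    · intro v
      show (g (h v)).length = v.length
      rw [hg1, hh1]
    · intro v w
      obtain ⟨t, ht⟩ := hh2 v w
      show g (h v) <+: g (h (v ++ w))
      rw [← ht]
      exact hg2 (h v) t
  inv_mem' := by
    rintro g ⟨hg1, hg2⟩
    have hlen : ∀ v : V, (g⁻¹ v).length = v.length := by
      intro v
      have h1 := hg1 (g⁻¹ v)
      rw [show ∀ x, g (g⁻¹ x) = x from fun x => g.apply_symm_apply x] at h1
      exact h1.symm
    constructor
    · exact hlen
    · intro v w
      set u : V := (g⁻¹ (v ++ w)).take v.length with hu_def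
      have hu : u <+: g⁻¹ (v ++ w) := List.take_prefix _ _
      have hulen : u.length = v.length := by
        rw [hu_def, List.length_take, hlen, List.length_append]
        omega
      obtain ⟨t, ht⟩ := hu
      have hpre : g u <+: v ++ w := by
        have h2 := hg2 u t
        rwa [ht, show ∀ x, g (g⁻¹ x) = x from fun x => g.apply_symm_apply x] at h2
      have hgu : g u = v := by
        obtain ⟨r, hr⟩ := hpre
        have h3 : (g u ++ r).take (g u).length = g u := List.take_left
        rw [hr, hg1, hulen] at h3
        rw [← h3, List.take_left]
      have huv : u = g⁻¹ v := by
        rw [← hgu]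
        exact (g.symm_apply_apply u).symm
      rw [← huv, ← ht]
      exact ⟨t, rfl⟩

theorem lenA_aux : ∀ v : V, (actA v).length = v.length := by
  intro v; cases v <;> simp [actA]

theorem prefA_aux : ∀ v w : V, actA v <+: actA (v ++ w) := by
  intro v w
  cases v with
  | nil => simp [actA]
  | cons x v => simp [actA, List.cons_prefix_cons, List.prefix_append]

theorem treelem : ∀ v : V,
    ((actB v).length = v.length ∧
      (actC v).length = v.length ∧ (actD v).length = v.length) ∧
    ∀ w : V, (actB v <+: actB (v ++ w)) ∧
      (actC v <+: actC (v ++ w)) ∧ (actD v <+: actD (v ++ w)) := by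
  intro v
  induction v with
  | nil =>
    refine ⟨⟨rfl, rfl, rfl⟩, fun w => ?_⟩
    simp [actB, actC, actD]
  | cons x v ih =>
    cases x <;>
      refine ⟨⟨?_, ?_, ?_⟩, fun w => ⟨?_, ?_, ?_⟩⟩ <;>
        simp [actB, actC, actD, ih.1.1, ih.1.2.1, ih.1.2.2, lenA_aux v,
          List.cons_prefix_cons, List.prefix_append] <;>
        first
          | exact (ih.2 w).1
          | exact (ih.2 w).2.1
          | exact (ih.2 w).2.2
          | exact prefA_aux v w

theorem a_mem_autTree : a ∈ autTree := ⟨lenA_aux, prefA_aux⟩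
theorem b_mem_autTree : b ∈ autTree :=
  ⟨fun v => (treelem v).1.1, fun v w => ((treelem v).2 w).1⟩
theorem c_mem_autTree : c ∈ autTree :=
  ⟨fun v => (treelem v).1.2.1, fun v w => ((treelem v).2 w).2.1⟩
theorem d_mem_autTree : d ∈ autTree :=
  ⟨fun v => (treelem v).1.2.2, fun v w => ((treelem v).2 w).2.2⟩

theorem G_le_autTree : G ≤ autTree := by
  rw [G, Subgroup.closure_le]
  rintro x hx
  simp only [Set.mem_insert_iff, Set.mem_singleton_iff] at hx
  rcases hx with rfl | rfl | rfl | rfl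
  exacts [a_mem_autTree, b_mem_autTree, c_mem_autTree, d_mem_autTree]

theorem lenG (g : ↥G) (v : V) : ((g : Perm V) v).length = v.length :=
  (G_le_autTree g.2).1 v


/-! ### Auxiliary machinery for the proof of the main lemma -/

theorem perm_apply_inv_self' (g : Perm V) (x : V) : g (g⁻¹ x) = x := g.apply_symm_apply x

open scoped commutatorElement

theorem vstar_apply_append (v : V) (g : Perm V) (w : V) :
    vstar v g (v ++ w) = v ++ g w := by
  show vstarFun v g (v ++ w) = v ++ g w
  simp [vstarFun, List.prefix_append, List.drop_left]

theorem vstar_apply_of_not_prefix (v : V) (g : Perm V) {w : V} (h : ¬ v <+: w) :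
    vstar v g w = w := by
  show vstarFun v g w = w
  simp [vstarFun, h]

theorem prefix_eq_of_length_eq {p q w : V} (hp : p <+: w) (hq : q <+: w)
    (h : p.length = q.length) : p = q := by
  rw [List.prefix_iff_eq_take.mp hp, List.prefix_iff_eq_take.mp hq, h]

theorem vstar_nil (g : Perm V) : vstar [] g = g := by
  refine Equiv.ext fun w => ?_
  show vstarFun [] g w = g w
  simp [vstarFun]

theorem vstar_mul (v : V) (g h : Perm V) :
    vstar v (g * h) = vstar v g * vstar v h := by
  refine Equiv.ext fun w => ?_
  show vstarFun v ⇑(g * h) w = vstarFun v g (vstarFun v h w)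
  rw [vstarFun_comp]
  rfl

/-- `vstar v` as a monoid homomorphism. -/
def vstarHom (v : V) : Perm V →* Perm V where
  toFun := vstar v
  map_one' := by
    refine Equiv.ext fun w => ?_
    show vstarFun v ⇑(1 : Perm V) w = w
    exact vstarFun_id v w
  map_mul' := vstar_mul v

theorem vstar_inv (v : V) (g : Perm V) : (vstar v g)⁻¹ = vstar v g⁻¹ :=
  ((vstarHom v).map_inv g).symm

theorem vstar_append (u t : V) (g : Perm V) :
    vstar (u ++ t) g = vstar u (vstar t g) := by
  refine Equiv.ext fun w => ?_
  by_cases h1 : u <+: w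
  · obtain ⟨r, rfl⟩ := h1
    by_cases h2 : t <+: r
    · obtain ⟨r', rfl⟩ := h2
      rw [vstar_apply_append, vstar_apply_append, ← List.append_assoc,
        vstar_apply_append, List.append_assoc]
    · have h3 : ¬ u ++ t <+: u ++ r := by
        intro hh
        exact h2 ((List.prefix_append_right_inj u).mp hh)
      rw [vstar_apply_of_not_prefix _ _ h3, vstar_apply_append,
        vstar_apply_of_not_prefix _ _ h2]
  · have h3 : ¬ u ++ t <+: w := fun hh => h1 (((u.prefix_append t)).trans hh)
    rw [vstar_apply_of_not_prefix _ _ h3, vstar_apply_of_not_prefix _ _ h1]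

theorem not_prefix_of_ne_of_length {v' v : V} (r : V) (hlen : v'.length = v.length)
    (hne : v' ≠ v) : ¬ v' <+: v ++ r := by
  intro hh
  exact hne (by
    have := List.prefix_iff_eq_take.mp hh
    rw [this, hlen, List.take_left])

theorem vstar_comm {v v' : V} (hlen : v.length = v'.length) (hne : v ≠ v')
    (g g' : Perm V) : vstar v g * vstar v' g' = vstar v' g' * vstar v g := by
  refine Equiv.ext fun w => ?_
  show vstar v g (vstar v' g' w) = vstar v' g' (vstar v g w)
  by_cases h1 : v <+: w
  · obtain ⟨r, rfl⟩ := h1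
    have h2 : ¬ v' <+: v ++ r := not_prefix_of_ne_of_length r hlen.symm (Ne.symm hne)
    have h3 : ¬ v' <+: v ++ g r := not_prefix_of_ne_of_length _ hlen.symm (Ne.symm hne)
    rw [vstar_apply_of_not_prefix _ _ h2, vstar_apply_append,
      vstar_apply_of_not_prefix _ _ h3]
  · by_cases h2 : v' <+: w
    · obtain ⟨r, rfl⟩ := h2
      have h3 : ¬ v <+: v' ++ g' r := not_prefix_of_ne_of_length _ hlen hne
      rw [vstar_apply_append, vstar_apply_of_not_prefix _ _ h3,
        vstar_apply_of_not_prefix _ _ h1, vstar_apply_append]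
    · rw [vstar_apply_of_not_prefix _ _ h2, vstar_apply_of_not_prefix _ _ h1,
        vstar_apply_of_not_prefix _ _ h2]

/-- Conjugating `v * k` by an automorphism `x` with state `s` at `v` gives
`(x v) * (s k s⁻¹)`. -/
theorem conj_vstar {x s : Perm V} {v : V} (hs : hasState x v s) (k : Perm V) :
    x * vstar v k * x⁻¹ = vstar (x v) (s * k * s⁻¹) := by
  refine Equiv.ext fun w => ?_
  show x (vstar v k (x⁻¹ w)) = vstar (x v) (s * k * s⁻¹) w
  by_cases h1 : x v <+: w
  · obtain ⟨r, rfl⟩ := h1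
    have hx : x⁻¹ (x v ++ r) = v ++ s⁻¹ r := by
      apply x.injective
      rw [perm_apply_inv_self', hs (s⁻¹ r), perm_apply_inv_self']
    rw [hx, vstar_apply_append, hs, vstar_apply_append]
    simp [Perm.mul_apply]
  · have h2 : ¬ v <+: x⁻¹ w := by
      rintro ⟨r, hr⟩
      apply h1
      have : w = x v ++ s r := by
        rw [← hs r, hr, perm_apply_inv_self']
      exact this ▸ List.prefix_append _ _
    rw [vstar_apply_of_not_prefix _ _ h2, perm_apply_inv_self',
      vstar_apply_of_not_prefix _ _ h1]

theorem grp_calc {M : Type*} [Group M] (q pa pb : M)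
    (h2 : q * (pa⁻¹ * pb * pa) = (pa⁻¹ * pb * pa) * q) :
    pb⁻¹ * (q * pa⁻¹) * pb * (q * pa⁻¹)⁻¹ = pb⁻¹ * pa⁻¹ * pb * pa := by
  have : pb⁻¹ * (q * pa⁻¹) * pb * (q * pa⁻¹)⁻¹
      = pb⁻¹ * (q * (pa⁻¹ * pb * pa)) * q⁻¹ := by group
  rw [this, h2]
  group

/-- **Lemma.** Let `Gs ≤ Aut X*` be a level-transitive, self-similar group which is
regular branch over `Ks`.  Then every non-trivial normal subgroup of `Gs` contains
`Xⁿ*Ks'` for all `n` big enough, where `Ks' = [Ks, Ks]`. -/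
theorem stmt10 (Gs Ks : Subgroup (Perm V))
    (htree : Gs ≤ autTree)
    (hKsub : Ks ≤ Gs)
    (hlevtrans : ∀ v w : V, v.length = w.length → ∃ g ∈ Gs, g v = w)
    (hselfsim : ∀ g ∈ Gs, ∀ v : V, ∃ s ∈ Gs, hasState g v s)
    (hKnontriv : Ks ≠ ⊥)
    (hbranching : XstarSub 1 Ks ≤ Ks)
    (hfinindex : ∀ n : ℕ, (XstarSub n Ks).relIndex Gs ≠ 0) :
    ∀ N : Subgroup (Perm V), N ≤ Gs →
      (∀ g ∈ Gs, ∀ x ∈ N, g * x * g⁻¹ ∈ N) → N ≠ ⊥ →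
      ∃ n₀ : ℕ, ∀ n : ℕ, n₀ ≤ n → XstarSub n ⁅Ks, Ks⁆ ≤ N := by
  intro N hNle hnorm hNbot
  -- `vstar v k ∈ Ks` for any vertex `v` and `k ∈ Ks`
  have hKv : ∀ (v : V) (g : Perm V), g ∈ Ks → vstar v g ∈ Ks := by
    intro v
    induction v with
    | nil => intro g hg; rw [vstar_nil]; exact hg
    | cons y u ih =>
      intro g hg
      have he : vstar (y :: u) g = vstar [y] (vstar u g) := by
        rw [← vstar_append]; rfl
      rw [he]
      exact hbranching (Subgroup.subset_closure ⟨[y], vstar u g, rfl, ih g hg, rfl⟩)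
  -- pick a nontrivial element of N and a vertex it moves
  obtain ⟨g₀, hg₀N, hg₀⟩ : ∃ g₀ ∈ N, g₀ ≠ 1 := by
    by_contra hcon
    push_neg at hcon
    exact hNbot ((Subgroup.eq_bot_iff_forall N).mpr hcon)
  obtain ⟨u₀, hu₀⟩ : ∃ u₀ : V, g₀ u₀ ≠ u₀ := by
    by_contra hcon
    push_neg at hcon
    exact hg₀ (Equiv.ext hcon)
  refine ⟨u₀.length, fun n hn => ?_⟩
  -- the key step: for every vertex of level n, `vstar v ⁅k₁,k₂⁆ ∈ N`
  have key : ∀ v : V, v.length = n → ∀ k₁ ∈ Ks, ∀ k₂ ∈ Ks,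
      vstar v ⁅k₁, k₂⁆ ∈ N := by
    intro v hvlen k₁ hk₁ k₂ hk₂
    -- find a vertex u of level n moved by g₀
    set u : V := u₀ ++ List.replicate (n - u₀.length) false with hu_def
    have hulen : u.length = n := by
      simp only [hu_def, List.length_append, List.length_replicate]
      omega
    have hmove : g₀ u ≠ u := by
      intro hEq
      apply hu₀
      have h1 : g₀ u₀ <+: g₀ u := (htree (hNle hg₀N)).2 u₀ _
      have h2 : g₀ u₀ = (g₀ u).take u₀.length := by
        have := List.prefix_iff_eq_take.mp h1
        rwa [(htree (hNle hg₀N)).1 u₀] at this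
      rw [h2, hEq, hu_def, List.take_left]
    -- transport: x ∈ N moves v
    obtain ⟨h, hhG, hhv⟩ := hlevtrans v u (hvlen.trans hulen.symm)
    set x : Perm V := h⁻¹ * g₀ * h with hx_def
    have hxN : x ∈ N := by
      have := hnorm h⁻¹ (inv_mem hhG) g₀ hg₀N
      rwa [inv_inv] at this
    have hxG : x ∈ Gs := hNle hxN
    have hxv : x v ≠ v := by
      intro hEq
      apply hmove
      have h3 : h⁻¹ (g₀ (h v)) = v := hEq
      have h4 : g₀ (h v) = h v := by
        conv_rhs => rw [← h3]
        rw [perm_apply_inv_self']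
      rwa [hhv] at h4
    -- the state of x at v
    obtain ⟨s, hsG, hs⟩ := hselfsim x hxG v
    have hvb_len : (x v).length = v.length := (htree hxG).1 v
    -- the general commutator construction
    have core : ∀ a ∈ Ks, ∀ bb ∈ Ks, vstar v (bb⁻¹ * a⁻¹ * bb * a) ∈ N := by
      intro a ha bb hbb
      set pa : Perm V := vstar v a with hpa_def
      set pb : Perm V := vstar v bb with hpb_def
      set q : Perm V := vstar (x v) (s * a * s⁻¹) with hq_def
      have hpaG : pa ∈ Gs := hKsub (hKv v a ha)
      have hpbG : pb ∈ Gs := hKsub (hKv v bb hbb)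
      -- A' := x * (pa * x⁻¹ * pa⁻¹) ∈ N and equals q * pa⁻¹
      have hA'N : x * (pa * x⁻¹ * pa⁻¹) ∈ N :=
        N.mul_mem hxN (hnorm pa hpaG x⁻¹ (N.inv_mem hxN))
      have hA'eq : x * (pa * x⁻¹ * pa⁻¹) = q * pa⁻¹ := by
        have h5 : x * pa * x⁻¹ = q := conj_vstar hs a
        rw [← h5]; group
      rw [hA'eq] at hA'N
      -- B := pb⁻¹ * (q * pa⁻¹) * pb * (q * pa⁻¹)⁻¹ ∈ N
      have hBN : pb⁻¹ * (q * pa⁻¹) * pb * (q * pa⁻¹)⁻¹ ∈ N := by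
        refine N.mul_mem ?_ (N.inv_mem hA'N)
        have := hnorm pb⁻¹ (inv_mem hpbG) (q * pa⁻¹) hA'N
        rwa [inv_inv] at this
      have hcomm : q * (pa⁻¹ * pb * pa) = (pa⁻¹ * pb * pa) * q := by
        rw [hpa_def, hpb_def, hq_def, vstar_inv, ← vstar_mul, ← vstar_mul]
        exact vstar_comm hvb_len hxv _ _
      have hBeq := grp_calc q pa pb hcomm
      rw [hBeq] at hBN
      have h6 : pb⁻¹ * pa⁻¹ * pb * pa = vstar v (bb⁻¹ * a⁻¹ * bb * a) := by
        rw [hpa_def, hpb_def, vstar_inv, vstar_inv, ← vstar_mul, ← vstar_mul,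
          ← vstar_mul]
      rwa [h6] at hBN
    have := core k₂⁻¹ (Ks.inv_mem hk₂) k₁⁻¹ (Ks.inv_mem hk₁)
    rw [commutatorElement_def]
    rwa [inv_inv, inv_inv] at this
  -- conclude
  rw [XstarSub]
  rw [Subgroup.closure_le]
  rintro p ⟨v, g, hvl, hgK, rfl⟩
  have hle : ⁅Ks, Ks⁆ ≤ N.comap (vstarHom v) := by
    rw [Subgroup.commutator_le]
    intro k₁ hk₁ k₂ hk₂
    exact key v hvl k₁ hk₁ k₂ hk₂
  exact hle hgK
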